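/- arXiv:1507.01703 — 2 statements merged into one kernel-verified Lean document; each statement's English description precedes it below -/
import Mathlib

section
/- The infinite sum of 2^i/(i * binom(2i, i)) for i from 1 to infinity equals π/2. -/
open Real Finset

open MeasureTheory in
private lemma beta_nat : ∀ (n m : ℕ), (∫ x in (0:ℝ)..1, x ^ m * (1 - x) ^ n)
    = (m.factorial : ℝ) * n.factorial / (m + n + 1).factorial := by
  intro n
  induction n with
  | zero =>
    intro m
    have h1 : (∫ x in (0:ℝ)..1, x ^ m * (1 - x) ^ 0) = ∫ x in (0:ℝ)..1, x ^ m := by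
      simp
    rw [h1, integral_pow, Nat.add_zero, Nat.factorial_succ]
    have hm : (m.factorial : ℝ) ≠ 0 := Nat.cast_ne_zero.mpr (Nat.factorial_ne_zero m)
    have hm1 : (m : ℝ) + 1 ≠ 0 := by positivity
    rw [one_pow, zero_pow (by omega), sub_zero]
    push_cast
    field_simp
    simp
  | succ n ih =>
    intro m
    have hm1 : (m : ℝ) + 1 ≠ 0 := by positivity
    have key : (∫ x in (0:ℝ)..1, x ^ m * (1 - x) ^ (n+1))
        = ((n:ℝ)+1)/((m:ℝ)+1) * ∫ x in (0:ℝ)..1, x ^ (m+1) * (1 - x) ^ n := by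
      have hd : ∀ x ∈ Set.uIcc (0:ℝ) 1,
          HasDerivAt (fun x : ℝ => x ^ (m+1) * (1 - x) ^ (n+1) / ((m:ℝ)+1))
            (x ^ m * (1-x)^(n+1) - ((n:ℝ)+1)/((m:ℝ)+1) * (x ^ (m+1) * (1-x)^n)) x := by
        intro x _
        have h1 : HasDerivAt (fun x : ℝ => x ^ (m+1)) (((m:ℝ)+1) * x ^ m) x := by
          simpa using hasDerivAt_pow (m+1) x
        have h2 : HasDerivAt (fun x : ℝ => (1 - x) ^ (n+1)) (-(((n:ℝ)+1) * (1-x)^n)) x := by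
          have h3 := (hasDerivAt_pow (n+1) (1 - x)).comp x ((hasDerivAt_id x).const_sub 1)
          refine h3.congr_deriv ?_
          rw [Nat.add_sub_cancel]
          push_cast
          ring
        have h4 := (h1.mul h2).div_const ((m:ℝ)+1)
        refine h4.congr_deriv ?_
        field_simp
        ring
      have hint : IntervalIntegrable
          (fun x : ℝ => x ^ m * (1-x)^(n+1) - ((n:ℝ)+1)/((m:ℝ)+1) * (x ^ (m+1) * (1-x)^n))
          volume 0 1 := by
        apply Continuous.intervalIntegrable
        continuity
      have h0 := intervalIntegral.integral_eq_sub_of_hasDerivAt hd hint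
      have h0' : (∫ x in (0:ℝ)..1,
          (x ^ m * (1-x)^(n+1) - ((n:ℝ)+1)/((m:ℝ)+1) * (x ^ (m+1) * (1-x)^n))) = 0 := by
        rw [h0]
        norm_num
      rw [intervalIntegral.integral_sub (by apply Continuous.intervalIntegrable; continuity)
        (by apply Continuous.intervalIntegrable; continuity),
        intervalIntegral.integral_const_mul, sub_eq_zero] at h0'
      exact h0'
    rw [key, ih (m+1)]
    have h2 : m + 1 + n + 1 = m + (n + 1) + 1 := by omega
    rw [h2, Nat.factorial_succ m, Nat.factorial_succ n]
    have hf1 : (m.factorial : ℝ) ≠ 0 := Nat.cast_ne_zero.mpr (Nat.factorial_ne_zero m)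
    have hf2 : (n.factorial : ℝ) ≠ 0 := Nat.cast_ne_zero.mpr (Nat.factorial_ne_zero n)
    have hf3 : ((m + (n+1) + 1).factorial : ℝ) ≠ 0 :=
      Nat.cast_ne_zero.mpr (Nat.factorial_ne_zero _)
    push_cast
    field_simp

set_option maxHeartbeats 1000000 in
open MeasureTheory in
theorem stmt_1 : (∑' i : ℕ, (2:ℝ)^(i+1) / (((i:ℝ)+1) * ((Nat.choose (2*(i+1)) (i+1)) : ℝ))) = Real.pi / 2 := by
  set f : ℕ → ℝ → ℝ := fun i x => (2:ℝ)^(i+1) * (x ^ i * (1 - x) ^ (i+1)) with hf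
  -- each term equals a Beta-type integral
  have hb : ∀ i : ℕ, (2:ℝ)^(i+1) / (((i:ℝ)+1) * ((Nat.choose (2*(i+1)) (i+1)) : ℝ))
      = ∫ x in Set.Ioc (0:ℝ) 1, f i x := by
    intro i
    rw [hf]
    rw [← intervalIntegral.integral_of_le zero_le_one,
        intervalIntegral.integral_const_mul, beta_nat (i+1) i]
    have h := Nat.choose_mul_factorial_mul_factorial (show i+1 ≤ 2*(i+1) by omega)
    rw [show 2*(i+1)-(i+1) = i+1 from by omega] at h
    have hN : (i+1) * ((2*(i+1)).choose (i+1)) * (i.factorial * (i+1).factorial)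
        = (2*(i+1)).factorial := by
      rw [show (i+1) * ((2*(i+1)).choose (i+1)) * (i.factorial * (i+1).factorial)
          = (2*(i+1)).choose (i+1) * ((i+1)*i.factorial) * (i+1).factorial from by ring,
        ← Nat.factorial_succ]
      exact h
    have hR : (((i:ℝ)+1) * (((2*(i+1)).choose (i+1) : ℕ) : ℝ))
        * ((i.factorial : ℝ) * ((i+1).factorial : ℝ)) = (((2*(i+1)).factorial : ℕ) : ℝ) := by
      exact_mod_cast hN
    rw [show i + (i+1) + 1 = 2*(i+1) from by omega]
    have hc0 : (((2*(i+1)).choose (i+1) : ℕ) : ℝ) ≠ 0 :=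
      Nat.cast_ne_zero.mpr (Nat.choose_pos (show i+1 ≤ 2*(i+1) by omega)).ne'
    have hi1 : ((i:ℝ)+1) ≠ 0 := by positivity
    have hfac : (((2*(i+1)).factorial : ℕ) : ℝ) ≠ 0 :=
      Nat.cast_ne_zero.mpr (Nat.factorial_ne_zero _)
    field_simp
    linear_combination (-1:ℝ) * hR
  -- integrability and summability for the interchange
  have hcont : ∀ i : ℕ, Continuous (f i) := by
    intro i; rw [hf]
    exact continuous_const.mul ((continuous_pow i).mul
      ((continuous_const.sub continuous_id).pow (i+1)))
  have hint : ∀ i : ℕ, Integrable (f i) (volume.restrict (Set.Ioc (0:ℝ) 1)) := fun i =>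
    (hcont i).integrableOn_Ioc
  have hptb : ∀ i : ℕ, ∀ x ∈ Set.Ioc (0:ℝ) 1, ‖f i x‖ ≤ 2 * (1/2:ℝ)^i := by
    intro i x hx
    obtain ⟨hx0, hx1⟩ := hx
    have h1x : (0:ℝ) ≤ 1 - x := by linarith
    have hnn : 0 ≤ f i x := by
      rw [hf]; positivity
    rw [Real.norm_eq_abs, abs_of_nonneg hnn, hf]
    have hxx : x * (1 - x) ≤ 1/4 := by nlinarith [sq_nonneg (2*x - 1)]
    have h5 : x ^ i * (1 - x) ^ (i+1) ≤ (1/4:ℝ)^i := by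
      rw [pow_succ, ← mul_assoc, ← mul_pow]
      calc (x * (1-x))^i * (1 - x) ≤ (1/4:ℝ)^i * 1 := by
            apply mul_le_mul (pow_le_pow_left₀ (by positivity) hxx i) (by linarith)
              h1x (by positivity)
        _ = (1/4:ℝ)^i := mul_one _
    calc (2:ℝ)^(i+1) * (x ^ i * (1 - x) ^ (i+1)) ≤ (2:ℝ)^(i+1) * (1/4:ℝ)^i :=
          mul_le_mul_of_nonneg_left h5 (by positivity)
      _ = 2 * (1/2:ℝ)^i := by
          rw [pow_succ, mul_comm ((2:ℝ)^i) 2, mul_assoc, ← mul_pow]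
          norm_num
  have hsum : Summable fun i : ℕ => ∫ x in Set.Ioc (0:ℝ) 1, ‖f i x‖ := by
    have hle : ∀ i : ℕ, (∫ x in Set.Ioc (0:ℝ) 1, ‖f i x‖) ≤ 2 * (1/2:ℝ)^i := by
      intro i
      calc (∫ x in Set.Ioc (0:ℝ) 1, ‖f i x‖) ≤ ∫ _ in Set.Ioc (0:ℝ) 1, 2 * (1/2:ℝ)^i := by
            apply setIntegral_mono_on (hint i).norm (integrableOn_const (by simp))
              measurableSet_Ioc (hptb i)
        _ = 2 * (1/2:ℝ)^i := by simp [Real.volume_Ioc]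
    exact Summable.of_nonneg_of_le (fun i => integral_nonneg fun x => norm_nonneg _) hle
      ((summable_geometric_of_lt_one (r := (1/2:ℝ)) (by norm_num) (by norm_num)).mul_left 2)
  have hswap := integral_tsum_of_summable_integral_norm hint hsum
  -- pointwise closed form of the series on Ioc 0 1
  have hclosed : ∀ x ∈ Set.Ioc (0:ℝ) 1,
      (∑' i : ℕ, f i x) = 2 * (1 - x) * (1 - 2*x*(1-x))⁻¹ := by
    intro x hx
    obtain ⟨hx0, hx1⟩ := hx
    have hr0 : 0 ≤ 2*x*(1-x) := by nlinarith
    have hr1 : 2*x*(1-x) < 1 := by nlinarith [sq_nonneg (2*x - 1)]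
    have h1 : ∀ i : ℕ, f i x = 2*(1-x) * (2*x*(1-x))^i := by
      intro i; rw [hf]; simp only [mul_pow]; ring
    rw [tsum_congr h1, tsum_mul_left, tsum_geometric_of_lt_one hr0 hr1]
  -- evaluate the integral
  have hval : (∫ x in Set.Ioc (0:ℝ) 1, 2 * (1 - x) * (1 - 2*x*(1-x))⁻¹) = Real.pi / 2 := by
    rw [← intervalIntegral.integral_of_le zero_le_one]
    have hd : ∀ x ∈ Set.uIcc (0:ℝ) 1,
        HasDerivAt (fun x : ℝ => -(1/2) * Real.log (2*x^2-2*x+1) + Real.arctan (2*x-1))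
          (2 * (1 - x) * (1 - 2*x*(1-x))⁻¹) x := by
      intro x _
      have hpos : (0:ℝ) < 2*x^2-2*x+1 := by nlinarith [sq_nonneg (2*x - 1)]
      have hq : HasDerivAt (fun x : ℝ => 2*x^2-2*x+1) (4*x-2) x := by
        have h := (((hasDerivAt_pow 2 x).const_mul (2:ℝ)).sub
          ((hasDerivAt_id x).const_mul (2:ℝ))).add_const 1
        refine h.congr_deriv ?_
        push_cast
        ring
      have hlog := ((Real.hasDerivAt_log hpos.ne').comp x hq).const_mul (-(1/2):ℝ)
      have hat : HasDerivAt (fun x : ℝ => Real.arctan (2*x-1))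
          ((1 + (2*x-1)^2)⁻¹ * 2) x := by
        have h2 : HasDerivAt (fun x : ℝ => 2*x-1) 2 x := by
          simpa using ((hasDerivAt_id x).const_mul (2:ℝ)).sub_const 1
        exact ((Real.hasDerivAt_arctan (2*x-1)).comp x h2).congr_deriv (by rw [one_div])
      have := hlog.add hat
      refine this.congr_deriv ?_
      have hne : (1 - 2*x*(1-x)) ≠ 0 := by nlinarith [sq_nonneg (2*x - 1)]
      have hne2 : (1 + (2*x-1)^2) ≠ 0 := by positivity
      rw [show 1 + (2*x-1)^2 = 2*(1-2*x*(1-x)) by ring, show 2*x^2-2*x+1 = 1-2*x*(1-x) by ring]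
      field_simp
      ring
    have hig : IntervalIntegrable (fun x : ℝ => 2 * (1 - x) * (1 - 2*x*(1-x))⁻¹) volume 0 1 := by
      apply Continuous.intervalIntegrable
      refine (continuous_const.mul (continuous_const.sub continuous_id)).mul
        (Continuous.inv₀ (continuous_const.sub ((continuous_const.mul continuous_id).mul
          (continuous_const.sub continuous_id))) fun x => ?_)
      nlinarith [sq_nonneg (2*x - 1)]
    rw [intervalIntegral.integral_eq_sub_of_hasDerivAt hd hig]
    norm_num [Real.arctan_one, Real.arctan_neg]
    ring
  calc (∑' i : ℕ, (2:ℝ)^(i+1) / (((i:ℝ)+1) * ((Nat.choose (2*(i+1)) (i+1)) : ℝ)))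
      = ∑' i : ℕ, ∫ x in Set.Ioc (0:ℝ) 1, f i x := tsum_congr hb
    _ = ∫ x in Set.Ioc (0:ℝ) 1, ∑' i : ℕ, f i x := hswap
    _ = ∫ x in Set.Ioc (0:ℝ) 1, 2 * (1 - x) * (1 - 2*x*(1-x))⁻¹ :=
        setIntegral_congr_fun measurableSet_Ioc hclosed
    _ = Real.pi / 2 := hval
end

section
/- The infinite sum over i ≥ 1 of 2^i · (∑_{j=1}^i 1/j²)/((2i+1) · binom(2i, i)) equals π³/48. -/
open Real Finset

noncomputable section AuxStmt12

/-- partial sums of 1/j^2 -/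
def Hq (n : ℕ) : ℝ := ∑ j ∈ Finset.range n, (1:ℝ)/((j:ℝ)+1)^2

/-- aa n = 4^n / ((2n+1) C(2n,n)) -/
def aa (n : ℕ) : ℝ := 4^n / ((2*(n:ℝ)+1) * (Nat.centralBinom n : ℝ))

lemma cb_pos (n : ℕ) : (0:ℝ) < (Nat.centralBinom n : ℝ) := by
  exact_mod_cast n.centralBinom_pos

lemma aa_pos (n : ℕ) : 0 < aa n := by
  have := cb_pos n
  unfold aa
  positivity

lemma aa_zero : aa 0 = 1 := by
  simp [aa, Nat.centralBinom]

lemma cb_rec (n : ℕ) :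
    ((n:ℝ)+1) * (Nat.centralBinom (n+1) : ℝ) = 2*(2*(n:ℝ)+1) * (Nat.centralBinom n : ℝ) := by
  have h := Nat.succ_mul_centralBinom_succ n
  have h' : (((n+1) * Nat.centralBinom (n+1) : ℕ) : ℝ) = ((2 * (2*n+1) * Nat.centralBinom n : ℕ) : ℝ) := by
    exact_mod_cast congrArg (Nat.cast : ℕ → ℝ) h
  push_cast at h'
  linarith [h']

lemma aa_rec (n : ℕ) : aa (n+1) * (2*(n:ℝ)+3) = aa n * (2*(n:ℝ)+2) := by
  have h0 := cb_pos n
  have h1 := cb_pos (n+1)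
  have hrec := cb_rec n
  unfold aa
  rw [div_mul_eq_mul_div, div_mul_eq_mul_div, div_eq_div_iff (by positivity) (by positivity)]
  push_cast
  linear_combination (-(4^n * (2*(n:ℝ)+3) * 2)) * hrec

lemma four_pow_le_nat (n : ℕ) : 4^n ≤ (2*n+1) * Nat.centralBinom n := by
  induction n with
  | zero => simp [Nat.centralBinom]
  | succ n ih =>
      have hrec := Nat.succ_mul_centralBinom_succ n
      have h2 : (n+1) * 4^(n+1) ≤ (n+1) * ((2*(n+1)+1) * Nat.centralBinom (n+1)) := by
        calc (n+1) * 4^(n+1) = 4 * ((n+1) * 4^n) := by ring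
        _ ≤ 4 * ((n+1) * ((2*n+1) * Nat.centralBinom n)) := by
              exact Nat.mul_le_mul_left 4 (Nat.mul_le_mul_left (n+1) ih)
        _ = (2*n+2) * (2 * (2*n+1) * Nat.centralBinom n) := by ring
        _ = (2*n+2) * ((n+1) * Nat.centralBinom (n+1)) := by rw [hrec]
        _ ≤ (2*(n+1)+1) * ((n+1) * Nat.centralBinom (n+1)) := by
              exact Nat.mul_le_mul_right _ (by omega)
        _ = (n+1) * ((2*(n+1)+1) * Nat.centralBinom (n+1)) := by ring
      exact Nat.le_of_mul_le_mul_left h2 (by omega)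

lemma aa_le_one (n : ℕ) : aa n ≤ 1 := by
  have h := four_pow_le_nat n
  have h' : (4:ℝ)^n ≤ (2*(n:ℝ)+1) * (Nat.centralBinom n : ℝ) := by exact_mod_cast h
  have hpos : (0:ℝ) < (2*(n:ℝ)+1) * (Nat.centralBinom n : ℝ) := by
    have := cb_pos n; positivity
  rw [aa, div_le_one hpos]
  exact h'

lemma Hq_nonneg (n : ℕ) : 0 ≤ Hq n := by
  unfold Hq; positivity

lemma Hq_le (n : ℕ) : Hq n ≤ n := by
  unfold Hq
  calc ∑ j ∈ Finset.range n, (1:ℝ)/((j:ℝ)+1)^2 ≤ ∑ j ∈ Finset.range n, (1:ℝ) := by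
        apply Finset.sum_le_sum
        intro j _
        rw [div_le_one (by positivity)]
        nlinarith [Nat.cast_nonneg (α := ℝ) j]
  _ = n := by simp

lemma Hq_succ (n : ℕ) : Hq (n+1) = Hq n + 1/((n:ℝ)+1)^2 := by
  unfold Hq
  rw [Finset.sum_range_succ]

lemma Hq_zero : Hq 0 = 0 := by simp [Hq]

end AuxStmt12

noncomputable section AuxStmt12b

def Ft (n : ℕ) (x : ℝ) : ℝ := aa n * Hq n * x^(2*n+1)
def Ft' (n : ℕ) (x : ℝ) : ℝ := aa n * Hq n * (2*(n:ℝ)+1) * x^(2*n)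
def Gt (n : ℕ) (x : ℝ) : ℝ := aa n * x^(2*n+1)
def Gt' (n : ℕ) (x : ℝ) : ℝ := aa n * (2*(n:ℝ)+1) * x^(2*n)
def Rt (n : ℕ) (x : ℝ) : ℝ := aa n / ((n:ℝ)+1) * x^(2*n+2)
def Rt' (n : ℕ) (x : ℝ) : ℝ := aa n / ((n:ℝ)+1) * (2*(n:ℝ)+2) * x^(2*n+1)

def u0 (n : ℕ) : ℝ := 3*((n:ℝ)+1)^2*(9/16)^n

lemma summable_u0 : Summable u0 := by
  have h2 : Summable (fun n : ℕ => ((n:ℝ))^2 * (9/16)^n) :=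
    summable_pow_mul_geometric_of_norm_lt_one 2 (by rw [Real.norm_eq_abs, abs_of_nonneg (by norm_num : (0:ℝ) ≤ 9/16)]; norm_num)
  have h1 : Summable (fun n : ℕ => ((n:ℝ))^1 * (9/16)^n) :=
    summable_pow_mul_geometric_of_norm_lt_one 1 (by rw [Real.norm_eq_abs, abs_of_nonneg (by norm_num : (0:ℝ) ≤ 9/16)]; norm_num)
  have h0 : Summable (fun n : ℕ => ((9:ℝ)/16)^n) := summable_geometric_of_lt_one (by norm_num) (by norm_num)
  have hsum := ((h2.add (h1.mul_left 2)).add h0).mul_left 3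
  apply hsum.congr
  intro n
  unfold u0
  push_cast
  try ring

lemma pow_abs_le {x : ℝ} (hx : |x| ≤ 3/4) (n k : ℕ) : |x^(2*n+k)| ≤ (9/16)^n := by
  have h0 : (0:ℝ) ≤ |x| := abs_nonneg x
  rw [abs_pow, pow_add, pow_mul]
  calc (|x|^2)^n * |x|^k ≤ ((3/4:ℝ)^2)^n * 1^k := by
        gcongr
        all_goals first
          | nlinarith
          | linarith
  _ ≤ (9/16)^n := by norm_num

lemma aa_abs (n : ℕ) : |aa n| ≤ 1 := by
  rw [abs_of_pos (aa_pos n)]; exact aa_le_one n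

lemma Hq_abs (n : ℕ) : |Hq n| ≤ (n:ℝ)+1 := by
  rw [abs_of_nonneg (Hq_nonneg n)]
  linarith [Hq_le n]

lemma q_nonneg (n : ℕ) : (0:ℝ) ≤ (9/16)^n := by positivity

lemma Ft_bound {x : ℝ} (hx : |x| ≤ 3/4) (n : ℕ) : ‖Ft n x‖ ≤ u0 n := by
  rw [Real.norm_eq_abs, Ft, abs_mul, abs_mul]
  calc |aa n| * |Hq n| * |x^(2*n+1)| ≤ 1 * ((n:ℝ)+1) * (9/16)^n := by
        gcongr
        · exact aa_abs n
        · exact Hq_abs n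
        · exact pow_abs_le hx n 1
  _ ≤ u0 n := by unfold u0; nlinarith [q_nonneg n, mul_nonneg (sq_nonneg ((n:ℝ)+1)) (q_nonneg n), mul_nonneg (Nat.cast_nonneg (α := ℝ) n) (q_nonneg n), mul_nonneg (mul_nonneg (Nat.cast_nonneg (α := ℝ) n) (Nat.cast_nonneg (α := ℝ) n)) (q_nonneg n)]

lemma Ft'_bound {x : ℝ} (hx : |x| ≤ 3/4) (n : ℕ) : ‖Ft' n x‖ ≤ u0 n := by
  rw [Real.norm_eq_abs, Ft', abs_mul, abs_mul, abs_mul]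
  calc |aa n| * |Hq n| * |2*(n:ℝ)+1| * |x^(2*n)| ≤ 1 * ((n:ℝ)+1) * (2*(n:ℝ)+2) * (9/16)^n := by
        gcongr
        · exact aa_abs n
        · exact Hq_abs n
        · rw [abs_of_nonneg (by positivity)]; linarith
        · exact pow_abs_le hx n 0
  _ ≤ u0 n := by unfold u0; nlinarith [q_nonneg n, mul_nonneg (sq_nonneg ((n:ℝ)+1)) (q_nonneg n), mul_nonneg (Nat.cast_nonneg (α := ℝ) n) (q_nonneg n), mul_nonneg (mul_nonneg (Nat.cast_nonneg (α := ℝ) n) (Nat.cast_nonneg (α := ℝ) n)) (q_nonneg n)]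

lemma Gt_bound {x : ℝ} (hx : |x| ≤ 3/4) (n : ℕ) : ‖Gt n x‖ ≤ u0 n := by
  rw [Real.norm_eq_abs, Gt, abs_mul]
  calc |aa n| * |x^(2*n+1)| ≤ 1 * (9/16)^n := by
        gcongr
        · exact aa_abs n
        · exact pow_abs_le hx n 1
  _ ≤ u0 n := by unfold u0; nlinarith [q_nonneg n, mul_nonneg (sq_nonneg ((n:ℝ)+1)) (q_nonneg n), mul_nonneg (Nat.cast_nonneg (α := ℝ) n) (q_nonneg n), mul_nonneg (mul_nonneg (Nat.cast_nonneg (α := ℝ) n) (Nat.cast_nonneg (α := ℝ) n)) (q_nonneg n)]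

lemma Gt'_bound {x : ℝ} (hx : |x| ≤ 3/4) (n : ℕ) : ‖Gt' n x‖ ≤ u0 n := by
  rw [Real.norm_eq_abs, Gt', abs_mul, abs_mul]
  calc |aa n| * |2*(n:ℝ)+1| * |x^(2*n)| ≤ 1 * (2*(n:ℝ)+2) * (9/16)^n := by
        gcongr
        · exact aa_abs n
        · rw [abs_of_nonneg (by positivity)]; linarith
        · exact pow_abs_le hx n 0
  _ ≤ u0 n := by unfold u0; nlinarith [q_nonneg n, mul_nonneg (sq_nonneg ((n:ℝ)+1)) (q_nonneg n), mul_nonneg (Nat.cast_nonneg (α := ℝ) n) (q_nonneg n), mul_nonneg (mul_nonneg (Nat.cast_nonneg (α := ℝ) n) (Nat.cast_nonneg (α := ℝ) n)) (q_nonneg n)]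

lemma aa_div_abs (n : ℕ) : |aa n / ((n:ℝ)+1)| ≤ 1 := by
  rw [abs_div, abs_of_nonneg (by positivity : (0:ℝ) ≤ (n:ℝ)+1)]
  rw [div_le_one (by positivity)]
  calc |aa n| ≤ 1 := aa_abs n
  _ ≤ (n:ℝ)+1 := by nlinarith [Nat.cast_nonneg (α := ℝ) n]

lemma Rt_bound {x : ℝ} (hx : |x| ≤ 3/4) (n : ℕ) : ‖Rt n x‖ ≤ u0 n := by
  rw [Real.norm_eq_abs, Rt, abs_mul]
  calc |aa n / ((n:ℝ)+1)| * |x^(2*n+2)| ≤ 1 * (9/16)^n := by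
        gcongr
        · exact aa_div_abs n
        · exact pow_abs_le hx n 2
  _ ≤ u0 n := by unfold u0; nlinarith [q_nonneg n, mul_nonneg (sq_nonneg ((n:ℝ)+1)) (q_nonneg n), mul_nonneg (Nat.cast_nonneg (α := ℝ) n) (q_nonneg n), mul_nonneg (mul_nonneg (Nat.cast_nonneg (α := ℝ) n) (Nat.cast_nonneg (α := ℝ) n)) (q_nonneg n)]

lemma Rt'_bound {x : ℝ} (hx : |x| ≤ 3/4) (n : ℕ) : ‖Rt' n x‖ ≤ u0 n := by
  rw [Real.norm_eq_abs, Rt', abs_mul, abs_mul]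
  calc |aa n / ((n:ℝ)+1)| * |2*(n:ℝ)+2| * |x^(2*n+1)| ≤ 1 * (2*(n:ℝ)+2) * (9/16)^n := by
        gcongr
        · exact aa_div_abs n
        · rw [abs_of_nonneg (by positivity)]
        · exact pow_abs_le hx n 1
  _ ≤ u0 n := by unfold u0; nlinarith [q_nonneg n, mul_nonneg (sq_nonneg ((n:ℝ)+1)) (q_nonneg n), mul_nonneg (Nat.cast_nonneg (α := ℝ) n) (q_nonneg n), mul_nonneg (mul_nonneg (Nat.cast_nonneg (α := ℝ) n) (Nat.cast_nonneg (α := ℝ) n)) (q_nonneg n)]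

-- summability at a point
lemma sum_Ft {x : ℝ} (hx : |x| ≤ 3/4) : Summable (fun n => Ft n x) :=
  Summable.of_norm_bounded summable_u0 (fun n => Ft_bound hx n)
lemma sum_Ft' {x : ℝ} (hx : |x| ≤ 3/4) : Summable (fun n => Ft' n x) :=
  Summable.of_norm_bounded summable_u0 (fun n => Ft'_bound hx n)
lemma sum_Gt {x : ℝ} (hx : |x| ≤ 3/4) : Summable (fun n => Gt n x) :=
  Summable.of_norm_bounded summable_u0 (fun n => Gt_bound hx n)
lemma sum_Gt' {x : ℝ} (hx : |x| ≤ 3/4) : Summable (fun n => Gt' n x) :=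
  Summable.of_norm_bounded summable_u0 (fun n => Gt'_bound hx n)
lemma sum_Rt {x : ℝ} (hx : |x| ≤ 3/4) : Summable (fun n => Rt n x) :=
  Summable.of_norm_bounded summable_u0 (fun n => Rt_bound hx n)
lemma sum_Rt' {x : ℝ} (hx : |x| ≤ 3/4) : Summable (fun n => Rt' n x) :=
  Summable.of_norm_bounded summable_u0 (fun n => Rt'_bound hx n)

-- pointwise derivatives
lemma hasDerivAt_Ft (n : ℕ) (x : ℝ) : HasDerivAt (fun y => Ft n y) (Ft' n x) x := by
  have h := (hasDerivAt_pow (2*n+1) x).const_mul (aa n * Hq n)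
  refine h.congr_deriv (Eq.symm ?_)
  unfold Ft'
  push_cast
  ring

lemma hasDerivAt_Gt (n : ℕ) (x : ℝ) : HasDerivAt (fun y => Gt n y) (Gt' n x) x := by
  have h := (hasDerivAt_pow (2*n+1) x).const_mul (aa n)
  refine h.congr_deriv (Eq.symm ?_)
  unfold Gt'
  push_cast
  ring

lemma hasDerivAt_Rt (n : ℕ) (x : ℝ) : HasDerivAt (fun y => Rt n y) (Rt' n x) x := by
  have h := (hasDerivAt_pow (2*n+2) x).const_mul (aa n / ((n:ℝ)+1))
  refine h.congr_deriv (Eq.symm ?_)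
  unfold Rt'
  push_cast
  ring

def tset : Set ℝ := Set.Ioo (-(3/4):ℝ) (3/4)

lemma tset_abs {x : ℝ} (hx : x ∈ tset) : |x| ≤ 3/4 :=
  abs_le.2 ⟨le_of_lt hx.1, le_of_lt hx.2⟩

lemma zero_mem_tset : (0:ℝ) ∈ tset := by constructor <;> norm_num

lemma hasDerivAt_fF {x : ℝ} (hx : x ∈ tset) :
    HasDerivAt (fun y => ∑' n, Ft n y) (∑' n, Ft' n x) x :=
  hasDerivAt_tsum_of_isPreconnected summable_u0 isOpen_Ioo (convex_Ioo _ _).isPreconnected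
    (fun n y _ => hasDerivAt_Ft n y) (fun n y hy => Ft'_bound (tset_abs hy) n)
    zero_mem_tset (sum_Ft (by norm_num)) hx

lemma hasDerivAt_gG {x : ℝ} (hx : x ∈ tset) :
    HasDerivAt (fun y => ∑' n, Gt n y) (∑' n, Gt' n x) x :=
  hasDerivAt_tsum_of_isPreconnected summable_u0 isOpen_Ioo (convex_Ioo _ _).isPreconnected
    (fun n y _ => hasDerivAt_Gt n y) (fun n y hy => Gt'_bound (tset_abs hy) n)
    zero_mem_tset (sum_Gt (by norm_num)) hx

lemma hasDerivAt_RR {x : ℝ} (hx : x ∈ tset) :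
    HasDerivAt (fun y => ∑' n, Rt n y) (∑' n, Rt' n x) x :=
  hasDerivAt_tsum_of_isPreconnected summable_u0 isOpen_Ioo (convex_Ioo _ _).isPreconnected
    (fun n y _ => hasDerivAt_Rt n y) (fun n y hy => Rt'_bound (tset_abs hy) n)
    zero_mem_tset (sum_Rt (by norm_num)) hx

-- functional equations
lemma eqR {x : ℝ} : (∑' n, Rt' n x) = 2 * ∑' n, Gt n x := by
  rw [← tsum_mul_left]
  apply tsum_congr
  intro n
  have hn : ((n:ℝ)+1) ≠ 0 := by positivity
  unfold Rt' Gt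
  field_simp

lemma eqG_term (n : ℕ) (x : ℝ) : Gt' (n+1) x = x^2 * Gt' n x + x * Gt n x := by
  have h := aa_rec n
  unfold Gt' Gt
  push_cast
  linear_combination x^(2*n+2) * h

lemma eqG {x : ℝ} (hx : |x| ≤ 3/4) :
    (∑' n, Gt' n x) = 1 + (x^2 * ∑' n, Gt' n x + x * ∑' n, Gt n x) := by
  have h0 : Gt' 0 x = 1 := by unfold Gt'; rw [aa_zero]; norm_num
  have key : (∑' n, Gt' (n+1) x) = x^2 * ∑' n, Gt' n x + x * ∑' n, Gt n x := by
    rw [← tsum_mul_left, ← tsum_mul_left,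
      ← Summable.tsum_add ((sum_Gt' hx).mul_left (x^2)) ((sum_Gt hx).mul_left x)]
    exact tsum_congr fun n => eqG_term n x
  calc (∑' n, Gt' n x) = Gt' 0 x + ∑' n, Gt' (n+1) x := Summable.tsum_eq_zero_add (sum_Gt' hx)
  _ = 1 + (x^2 * ∑' n, Gt' n x + x * ∑' n, Gt n x) := by rw [h0, key]

lemma eqF_term (n : ℕ) (x : ℝ) : Ft' (n+1) x = x^2 * Ft' n x + (x * Ft n x + 2 * Rt n x) := by
  have hn : ((n:ℝ)+1) ≠ 0 := by positivity
  have h3 : (2*(n:ℝ)+3) ≠ 0 := by positivity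
  have haa : aa (n+1) = aa n * (2*(n:ℝ)+2) / (2*(n:ℝ)+3) := by
    rw [eq_div_iff h3]
    exact aa_rec n
  unfold Ft' Ft Rt
  rw [Hq_succ, haa]
  push_cast
  field_simp
  ring

lemma eqF {x : ℝ} (hx : |x| ≤ 3/4) :
    (∑' n, Ft' n x) = x^2 * (∑' n, Ft' n x) + (x * (∑' n, Ft n x) + 2 * (∑' n, Rt n x)) := by
  have h0 : Ft' 0 x = 0 := by unfold Ft'; rw [Hq_zero]; ring
  have key : (∑' n, Ft' (n+1) x)
      = x^2 * (∑' n, Ft' n x) + (x * (∑' n, Ft n x) + 2 * (∑' n, Rt n x)) := by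
    rw [← tsum_mul_left, ← tsum_mul_left, ← tsum_mul_left,
      ← Summable.tsum_add ((sum_Ft hx).mul_left x) ((sum_Rt hx).mul_left 2),
      ← Summable.tsum_add ((sum_Ft' hx).mul_left (x^2))
        (((sum_Ft hx).mul_left x).add ((sum_Rt hx).mul_left 2))]
    exact tsum_congr fun n => eqF_term n x
  calc (∑' n, Ft' n x) = Ft' 0 x + ∑' n, Ft' (n+1) x := Summable.tsum_eq_zero_add (sum_Ft' hx)
  _ = x^2 * (∑' n, Ft' n x) + (x * (∑' n, Ft n x) + 2 * (∑' n, Rt n x)) := by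
      rw [h0, zero_add, key]

end AuxStmt12b
noncomputable section AuxStmt12c
open Real Finset

lemma tset_pos {x : ℝ} (hx : x ∈ tset) : 0 < 1 - x^2 := by
  have h := tset_abs hx
  nlinarith [sq_abs x, abs_nonneg x]

lemma tset_ne_one {x : ℝ} (hx : x ∈ tset) : x ≠ 1 := by
  have h := tset_abs hx
  intro h1
  rw [h1] at h
  norm_num at h

lemma tset_ne_neg_one {x : ℝ} (hx : x ∈ tset) : x ≠ -1 := by
  have h := tset_abs hx
  intro h1
  rw [h1] at h
  norm_num at h

lemma hasDerivAt_sqrt_one_sub_sq {x : ℝ} (hpos : 0 < 1 - x^2) :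
    HasDerivAt (fun y => Real.sqrt (1 - y^2)) (-x / Real.sqrt (1 - x^2)) x := by
  have hsne : Real.sqrt (1 - x^2) ≠ 0 := (Real.sqrt_pos.2 hpos).ne'
  have h1 : HasDerivAt (fun y : ℝ => 1 - y^2) (-(2*x^1)) x :=
    (hasDerivAt_pow 2 x).const_sub 1
  have h2 := (Real.hasDerivAt_sqrt hpos.ne').comp x h1
  refine h2.congr_deriv (Eq.symm ?_)
  field_simp

lemma hsub_tset : Set.Icc (0:ℝ) (Real.sqrt 2 / 2) ⊆ tset := by
  intro x hx
  have h2 : Real.sqrt 2 < 3/2 := by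
    rw [show (3:ℝ)/2 = Real.sqrt ((3/2)^2) from (Real.sqrt_sq (by norm_num)).symm]
    apply Real.sqrt_lt_sqrt (by norm_num)
    norm_num
  constructor
  · linarith [hx.1]
  · linarith [hx.2]

lemma gG_zero : (∑' n, Gt n (0:ℝ)) = 0 := by
  have hz : ∀ n : ℕ, Gt n (0:ℝ) = 0 := by
    intro n
    unfold Gt
    rw [zero_pow (by omega)]
    ring
  rw [tsum_congr hz, tsum_zero]

lemma RR_zero : (∑' n, Rt n (0:ℝ)) = 0 := by
  have hz : ∀ n : ℕ, Rt n (0:ℝ) = 0 := by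
    intro n
    unfold Rt
    rw [zero_pow (by omega)]
    ring
  rw [tsum_congr hz, tsum_zero]

lemma fF_zero : (∑' n, Ft n (0:ℝ)) = 0 := by
  have hz : ∀ n : ℕ, Ft n (0:ℝ) = 0 := by
    intro n
    unfold Ft
    rw [zero_pow (by omega)]
    ring
  rw [tsum_congr hz, tsum_zero]

lemma phi1_deriv {x : ℝ} (hx : x ∈ tset) :
    HasDerivAt (fun y => Real.sqrt (1-y^2) * (∑' n, Gt n y) - Real.arcsin y) 0 x := by
  have hx34 := tset_abs hx
  have hpos := tset_pos hx
  have hsne : Real.sqrt (1 - x^2) ≠ 0 := (Real.sqrt_pos.2 hpos).ne'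
  have hsq : Real.sqrt (1-x^2)^2 = 1-x^2 := Real.sq_sqrt hpos.le
  have h1 := hasDerivAt_sqrt_one_sub_sq hpos
  have h2 := hasDerivAt_gG hx
  have h3 := Real.hasDerivAt_arcsin (tset_ne_neg_one hx) (tset_ne_one hx)
  have hall := (h1.mul h2).sub h3
  refine hall.congr_deriv (Eq.symm ?_)
  have heq := eqG hx34
  have key : Real.sqrt (1-x^2) * (∑' n, Gt' n x)
      = x / Real.sqrt (1-x^2) * (∑' n, Gt n x) + 1 / Real.sqrt (1-x^2) := by
    rw [div_mul_eq_mul_div, ← add_div, eq_div_iff hsne]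
    linear_combination heq + (∑' n, Gt' n x) * hsq
  rw [key]
  ring

lemma gG_closed : ∀ x ∈ Set.Icc (0:ℝ) (Real.sqrt 2 / 2),
    Real.sqrt (1-x^2) * (∑' n, Gt n x) = Real.arcsin x := by
  have hconst := constant_of_has_deriv_right_zero
    (f := fun y => Real.sqrt (1-y^2) * (∑' n, Gt n y) - Real.arcsin y)
    (a := 0) (b := Real.sqrt 2 / 2)
    (fun y hy => ((phi1_deriv (hsub_tset hy)).continuousAt).continuousWithinAt)
    (fun y hy => ((phi1_deriv (hsub_tset (Set.mem_Icc.2 ⟨hy.1, hy.2.le⟩))).hasDerivWithinAt))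
  intro x hx
  have h := hconst x hx
  simp only [gG_zero, Real.arcsin_zero, mul_zero, sub_zero] at h
  linarith [h]

lemma phi2_deriv {x : ℝ} (hx : x ∈ Set.Icc (0:ℝ) (Real.sqrt 2 / 2)) :
    HasDerivAt (fun y => (∑' n, Rt n y) - (Real.arcsin y)^2) 0 x := by
  have hxt := hsub_tset hx
  have hx34 := tset_abs hxt
  have hpos := tset_pos hxt
  have hsne : Real.sqrt (1 - x^2) ≠ 0 := (Real.sqrt_pos.2 hpos).ne'
  have h2 := hasDerivAt_RR hxt
  have h3 := (Real.hasDerivAt_arcsin (tset_ne_neg_one hxt) (tset_ne_one hxt)).pow 2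
  have hall := h2.sub h3
  refine hall.congr_deriv (Eq.symm ?_)
  have hG := gG_closed x hx
  have hGv : (∑' n, Gt n x) = Real.arcsin x / Real.sqrt (1-x^2) := by
    rw [eq_div_iff hsne]
    linarith [hG]
  rw [eqR, hGv]
  field_simp
  norm_num

lemma RR_closed : ∀ x ∈ Set.Icc (0:ℝ) (Real.sqrt 2 / 2),
    (∑' n, Rt n x) = (Real.arcsin x)^2 := by
  have hconst := constant_of_has_deriv_right_zero
    (f := fun y => (∑' n, Rt n y) - (Real.arcsin y)^2)
    (a := 0) (b := Real.sqrt 2 / 2)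
    (fun y hy => ((phi2_deriv hy).continuousAt).continuousWithinAt)
    (fun y hy => ((phi2_deriv (Set.mem_Icc.2 ⟨hy.1, hy.2.le⟩)).hasDerivWithinAt))
  intro x hx
  have h := hconst x hx
  simp only [RR_zero, Real.arcsin_zero, sub_zero] at h
  nlinarith [h]

lemma phi3_deriv {x : ℝ} (hx : x ∈ Set.Icc (0:ℝ) (Real.sqrt 2 / 2)) :
    HasDerivAt (fun y => Real.sqrt (1-y^2) * (∑' n, Ft n y) - (2/3) * (Real.arcsin y)^3) 0 x := by
  have hxt := hsub_tset hx
  have hx34 := tset_abs hxt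
  have hpos := tset_pos hxt
  have hsne : Real.sqrt (1 - x^2) ≠ 0 := (Real.sqrt_pos.2 hpos).ne'
  have hsq : Real.sqrt (1-x^2)^2 = 1-x^2 := Real.sq_sqrt hpos.le
  have h1 := hasDerivAt_sqrt_one_sub_sq hpos
  have h2 := hasDerivAt_fF hxt
  have h3 := ((Real.hasDerivAt_arcsin (tset_ne_neg_one hxt) (tset_ne_one hxt)).pow 3).const_mul (2/3 : ℝ)
  have hall := (h1.mul h2).sub h3
  refine hall.congr_deriv (Eq.symm ?_)
  have heq := eqF hx34
  have hR := RR_closed x hx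
  have key : Real.sqrt (1-x^2) * (∑' n, Ft' n x)
      = x / Real.sqrt (1-x^2) * (∑' n, Ft n x)
        + 2 * (Real.arcsin x)^2 / Real.sqrt (1-x^2) := by
    rw [div_mul_eq_mul_div, ← add_div, eq_div_iff hsne]
    linear_combination heq + (∑' n, Ft' n x) * hsq + 2 * hR
  rw [key]
  ring

lemma fF_closed :
    Real.sqrt (1-(Real.sqrt 2 / 2)^2) * (∑' n, Ft n (Real.sqrt 2 / 2))
      = (2/3) * (Real.arcsin (Real.sqrt 2 / 2))^3 := by
  have hc0 : (0:ℝ) ≤ Real.sqrt 2 / 2 := by positivity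
  have hconst := constant_of_has_deriv_right_zero
    (f := fun y => Real.sqrt (1-y^2) * (∑' n, Ft n y) - (2/3) * (Real.arcsin y)^3)
    (a := 0) (b := Real.sqrt 2 / 2)
    (fun y hy => ((phi3_deriv hy).continuousAt).continuousWithinAt)
    (fun y hy => ((phi3_deriv (Set.mem_Icc.2 ⟨hy.1, hy.2.le⟩)).hasDerivWithinAt))
  have h := hconst (Real.sqrt 2 / 2) (Set.mem_Icc.2 ⟨hc0, le_refl _⟩)
  simp only [fF_zero, Real.arcsin_zero, mul_zero, sub_zero] at h
  nlinarith [h]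

lemma c_sq : (Real.sqrt 2 / 2)^2 = 1/2 := by
  rw [div_pow, Real.sq_sqrt (by norm_num : (0:ℝ) ≤ 2)]
  norm_num

lemma sqrt_one_sub_c_sq : Real.sqrt (1-(Real.sqrt 2 / 2)^2) = Real.sqrt 2 / 2 := by
  rw [c_sq, show (1:ℝ)-1/2 = (Real.sqrt 2 / 2)^2 by rw [c_sq]; norm_num]
  exact Real.sqrt_sq (by positivity)

lemma arcsin_c : Real.arcsin (Real.sqrt 2 / 2) = Real.pi / 4 := by
  rw [← Real.sin_pi_div_four]
  exact Real.arcsin_sin (by linarith [Real.pi_pos]) (by linarith [Real.pi_pos])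

lemma fF_value : (∑' n, Ft n (Real.sqrt 2 / 2)) = Real.sqrt 2 * Real.pi^3 / 96 := by
  have h := fF_closed
  rw [sqrt_one_sub_c_sq, arcsin_c] at h
  have hs2 : Real.sqrt 2 > 0 := by positivity
  have hsq2 : Real.sqrt 2 ^ 2 = 2 := Real.sq_sqrt (by norm_num)
  have h2 : Real.sqrt 2 / 2 * (∑' n, Ft n (Real.sqrt 2 / 2)) = Real.pi^3 / 96 := by
    rw [h]; ring
  linear_combination Real.sqrt 2 * h2 - ((∑' n, Ft n (Real.sqrt 2 / 2))/2) * hsq2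

end AuxStmt12c

theorem stmt_12 : (∑' i : ℕ, (2:ℝ)^(i+1) * (∑ j ∈ Finset.range (i+1), (1:ℝ)/((j:ℝ)+1)^2) / ((2*((i:ℝ)+1)+1) * ((Nat.choose (2*(i+1)) (i+1)) : ℝ))) = Real.pi^3 / 48 := by
  have hs2 : (0:ℝ) < Real.sqrt 2 := by positivity
  have hsq2 : Real.sqrt 2 ^ 2 = 2 := Real.sq_sqrt (by norm_num)
  have hcabs : |Real.sqrt 2 / 2| ≤ 3/4 := by
    rw [abs_of_nonneg (by positivity)]
    have h2 : Real.sqrt 2 < 3/2 := by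
      rw [show (3:ℝ)/2 = Real.sqrt ((3/2)^2) from (Real.sqrt_sq (by norm_num)).symm]
      apply Real.sqrt_lt_sqrt (by norm_num) (by norm_num)
    linarith
  have hterm : ∀ i : ℕ,
      (2:ℝ)^(i+1) * (∑ j ∈ Finset.range (i+1), (1:ℝ)/((j:ℝ)+1)^2) / ((2*((i:ℝ)+1)+1) * ((Nat.choose (2*(i+1)) (i+1)) : ℝ))
        = Real.sqrt 2 * Ft (i+1) (Real.sqrt 2 / 2) := by
    intro i
    have hcb : (Nat.centralBinom (i+1) : ℝ) = ((Nat.choose (2*(i+1)) (i+1)) : ℝ) := by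
      rw [Nat.centralBinom_eq_two_mul_choose]
    have hcbpos : (0:ℝ) < ((Nat.choose (2*(i+1)) (i+1)) : ℝ) := by
      rw [← hcb]; exact cb_pos (i+1)
    have hpw : (Real.sqrt 2 / 2)^(2*(i+1)+1) = ((1:ℝ)/2)^(i+1) * (Real.sqrt 2 / 2) := by
      rw [pow_succ, pow_mul, c_sq]
    unfold Ft
    rw [hpw, aa, hcb]
    have hHq : Hq (i+1) = ∑ j ∈ Finset.range (i+1), (1:ℝ)/((j:ℝ)+1)^2 := rfl
    rw [hHq]
    push_cast
    field_simp
    rw [show (4:ℝ)^(i+1) = 2^(i+1) * 2^(i+1) from by rw [← mul_pow]; norm_num]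
    have hss : Real.sqrt 2 * Real.sqrt 2 = 2 := by nlinarith [hsq2]
    have hPQ : (2:ℝ)^(i+1) * (1/2)^(i+1) = 1 := by rw [← mul_pow]; norm_num
    linear_combination (-(2*(2:ℝ)^(i+1))) * hPQ - ((2:ℝ)^(i+1) * 2^(i+1) * (1/2)^(i+1)) * hsq2
  rw [tsum_congr hterm, tsum_mul_left]
  have hsplit := Summable.tsum_eq_zero_add (sum_Ft hcabs)
  have hF0 : Ft 0 (Real.sqrt 2 / 2) = 0 := by
    unfold Ft
    rw [Hq_zero]
    ring
  rw [hF0, zero_add] at hsplit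
  rw [← hsplit, fF_value]
  rw [show Real.sqrt 2 * (Real.sqrt 2 * Real.pi^3 / 96) = (Real.sqrt 2 * Real.sqrt 2) * Real.pi^3/96 by ring]
  rw [show Real.sqrt 2 * Real.sqrt 2 = 2 by nlinarith [hsq2]]
  ring
end
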